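/- Let Γ be a discrete subgroup of SL(2,ℝ) and λ ∈ ℤ. If Φ(z,X) is a Jacobi-like form belonging to J_λ(Γ), then 𝔏_λ(Φ)(z,X) is a Jacobi-like form belonging to J_{λ+2}(Γ); that is, 𝔏_λ(J_λ(Γ)) ⊆ J_{λ+2}(Γ). -/

import Mathlib

noncomputable section

open Complex Polynomial

/-- The upper half plane `ℍ`, as a subset of `ℂ`. -/
def UHP : Set ℂ := {z : ℂ | 0 < z.im}

/-- `SL(2, ℝ)`. -/
abbrev SL2R := Matrix.SpecialLinearGroup (Fin 2) ℝ

/-- `GL⁺(2, ℝ)`, the group of real 2×2 matrices of positive determinant. -/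
abbrev GL2P := Matrix.GLPos (Fin 2) ℝ

/-- Topology on `SL(2,ℝ)` induced from the space of matrices (used to speak of
discrete subgroups of `SL(2,ℝ)`). -/
instance : TopologicalSpace SL2R :=
  TopologicalSpace.induced (fun g : SL2R => (g : Matrix (Fin 2) (Fin 2) ℝ)) inferInstance

/-- A function belongs to `𝓕` if it is holomorphic on the upper half plane. -/
def Hol (f : ℂ → ℂ) : Prop := DifferentiableOn ℂ f UHP

/-- `𝔍(γ, z) = cz + d` for `γ ∈ SL(2, ℝ)`. -/
def jJ (γ : SL2R) (z : ℂ) : ℂ := (γ 1 0 : ℝ) * z + (γ 1 1 : ℝ)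

/-- `𝔎(γ, z) = c/(cz + d)` for `γ ∈ SL(2, ℝ)`. -/
def kK (γ : SL2R) (z : ℂ) : ℂ := (γ 1 0 : ℝ) / jJ γ z

/-- `γ z = (az+b)/(cz+d)` for `γ ∈ SL(2, ℝ)`. -/
def mact (γ : SL2R) (z : ℂ) : ℂ := ((γ 0 0 : ℝ) * z + (γ 0 1 : ℝ)) / jJ γ z

/-- The underlying real matrix of an element of `GL⁺(2, ℝ)`. -/
def gmat (α : GL2P) : Matrix (Fin 2) (Fin 2) ℝ :=
  ((α : Matrix.GeneralLinearGroup (Fin 2) ℝ) : Matrix (Fin 2) (Fin 2) ℝ)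

/-- The determinant of an element of `GL⁺(2, ℝ)`. -/
def gdet (α : GL2P) : ℝ := (gmat α).det

/-- `𝔍(α, z) = cz + d` for `α ∈ GL⁺(2, ℝ)`. -/
def gJ (α : GL2P) (z : ℂ) : ℂ := (gmat α 1 0 : ℝ) * z + (gmat α 1 1 : ℝ)

/-- `𝔎(α, z) = c/(cz + d)` for `α ∈ GL⁺(2, ℝ)`. -/
def gK (α : GL2P) (z : ℂ) : ℂ := (gmat α 1 0 : ℝ) / gJ α z

/-- `α z = (az+b)/(cz+d)` for `α ∈ GL⁺(2, ℝ)`. -/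
def gact (α : GL2P) (z : ℂ) : ℂ := ((gmat α 0 0 : ℝ) * z + (gmat α 0 1 : ℝ)) / gJ α z

/-- `(det α)^(μ/2)` for `α ∈ GL⁺(2, ℝ)` and `μ ∈ ℤ`. -/
def detpow (α : GL2P) (μ : ℤ) : ℂ := ((gdet α ^ ((μ : ℝ) / 2) : ℝ) : ℂ)

/-- The weight-`ξ` action `F ∥_ξ γ` of `SL(2,ℝ)` on polynomials over `𝓕`:
`(F ∥_ξ γ)(z, X) = 𝔍(γ,z)^(-ξ) F(γz, 𝔍(γ,z)^2 (X - 𝔎(γ,z)))`. -/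
def polyAct (ξ : ℤ) (F : ℂ → Polynomial ℂ) (γ : SL2R) : ℂ → Polynomial ℂ := fun z =>
  Polynomial.C (jJ γ z ^ (-ξ)) *
    (F (mact γ z)).comp (Polynomial.C (jJ γ z ^ 2) * (Polynomial.X - Polynomial.C (kK γ z)))

/-- The weight-`ξ` action `F ∥_ξ α` of `GL⁺(2,ℝ)` on polynomials over `𝓕`:
`(F ∥_ξ α)(z, X) = (det α)^(ξ/2) 𝔍(α,z)^(-ξ) F(αz, (det α)⁻¹ 𝔍(α,z)^2 (X - 𝔎(α,z)))`. -/
def polyActG (ξ : ℤ) (F : ℂ → Polynomial ℂ) (α : GL2P) : ℂ → Polynomial ℂ := fun z =>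
  Polynomial.C (detpow α ξ * gJ α z ^ (-ξ)) *
    (F (gact α z)).comp
      (Polynomial.C ((gdet α : ℂ)⁻¹ * gJ α z ^ 2) * (Polynomial.X - Polynomial.C (gK α z)))

/-- The weight-`l` action `Φ |^J_l γ` of `SL(2,ℝ)` on formal power series over `𝓕`:
`(Φ |^J_l γ)(z, X) = 𝔍(γ,z)^(-l) e^(-𝔎(γ,z) X) Φ(γz, 𝔍(γ,z)^(-2) X)`. -/
def psAct (l : ℤ) (Φ : ℂ → PowerSeries ℂ) (γ : SL2R) : ℂ → PowerSeries ℂ := fun z =>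
  PowerSeries.C (jJ γ z ^ (-l)) *
    (PowerSeries.mk fun n => (-(kK γ z)) ^ n / (n.factorial : ℂ)) *
    PowerSeries.rescale (jJ γ z ^ (-2 : ℤ)) (Φ (mact γ z))

/-- The weight-`l` action `Φ |^J_l α` of `GL⁺(2,ℝ)` on formal power series over `𝓕`:
`(Φ |^J_l α)(z, X) = (det α)^(l/2) 𝔍(α,z)^(-l) e^(-𝔎(α,z) X) Φ(αz, (det α) 𝔍(α,z)^(-2) X)`. -/
def psActG (l : ℤ) (Φ : ℂ → PowerSeries ℂ) (α : GL2P) : ℂ → PowerSeries ℂ := fun z =>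
  PowerSeries.C (detpow α l * gJ α z ^ (-l)) *
    (PowerSeries.mk fun n => (-(gK α z)) ^ n / (n.factorial : ℂ)) *
    PowerSeries.rescale ((gdet α : ℂ) * gJ α z ^ (-2 : ℤ)) (Φ (gact α z))

/-- The map `Π^δ_m`: for `Φ(z,X) = Σ_k φ_k(z) X^(k+δ)`,
`(Π^δ_m Φ)(z, X) = Σ_{r=0}^m (1/r!) φ_(m-r)(z) X^r`. -/
def PiDM (δ m : ℕ) (Φ : ℂ → PowerSeries ℂ) : ℂ → Polynomial ℂ := fun z =>
  ∑ r ∈ Finset.range (m + 1),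
    Polynomial.C ((PowerSeries.coeff (m - r + δ) (Φ z)) / (r.factorial : ℂ)) *
      Polynomial.X ^ r

/-- Membership in `𝓕_m[X]`: degree at most `m` and holomorphic coefficients. -/
def InFmX (m : ℕ) (F : ℂ → Polynomial ℂ) : Prop :=
  (∀ z : ℂ, (F z).degree ≤ (m : WithBot ℕ)) ∧ ∀ r : ℕ, Hol fun z => (F z).coeff r

/-- Membership in `𝓕[[X]]_δ = X^δ 𝓕[[X]]` with holomorphic coefficients. -/
def InFXd (δ : ℕ) (Φ : ℂ → PowerSeries ℂ) : Prop :=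
  (∀ z : ℂ, ∀ k < δ, PowerSeries.coeff k (Φ z) = 0) ∧
    ∀ k : ℕ, Hol fun z => PowerSeries.coeff k (Φ z)

/-- `QP^m_ξ(Γ)`: quasimodular polynomials of weight `ξ` and degree at most `m` for `Γ`. -/
def IsQP (Γ : Subgroup SL2R) (ξ : ℤ) (m : ℕ) (F : ℂ → Polynomial ℂ) : Prop :=
  InFmX m F ∧ ∀ γ ∈ Γ, ∀ z ∈ UHP, polyAct ξ F γ z = F z

/-- `J_l(Γ)_δ`: Jacobi-like forms of weight `l` for `Γ` lying in `𝓕[[X]]_δ`. -/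
def IsJF (Γ : Subgroup SL2R) (l : ℤ) (δ : ℕ) (Φ : ℂ → PowerSeries ℂ) : Prop :=
  InFXd δ Φ ∧ ∀ γ ∈ Γ, ∀ z ∈ UHP, psAct l Φ γ z = Φ z

/-- `M_μ(Γ)`: modular forms of weight `μ` for `Γ` (cusp conditions suppressed). -/
def IsModular (Γ : Subgroup SL2R) (μ : ℤ) (f : ℂ → ℂ) : Prop :=
  Hol f ∧ ∀ γ ∈ Γ, ∀ z ∈ UHP, jJ γ z ^ (-μ) * f (mact γ z) = f z

/-- `QM^m_ξ(Γ)`: quasimodular forms of weight `ξ` and depth at most `m` for `Γ`. -/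
def IsQM (Γ : Subgroup SL2R) (ξ : ℤ) (m : ℕ) (f : ℂ → ℂ) : Prop :=
  Hol f ∧ ∃ g : ℕ → ℂ → ℂ, (∀ r, Hol (g r)) ∧
    ∀ γ ∈ Γ, ∀ z ∈ UHP,
      jJ γ z ^ (-ξ) * f (mact γ z) = ∑ r ∈ Finset.range (m + 1), g r z * kK γ z ^ r

/-- The factorial `t!` of an integer `t` (equal to `(t.toNat)!`; intended for `t ≥ 0`). -/
def zfact (t : ℤ) : ℂ := (t.toNat.factorial : ℂ)

/-- The radial heat operator `𝔏_μ = ∂/∂z - μ ∂/∂X - X ∂²/∂X²` on `𝓕[[X]]`. -/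
def heat (μ : ℝ) (Φ : ℂ → PowerSeries ℂ) : ℂ → PowerSeries ℂ := fun z =>
  PowerSeries.mk fun n =>
    deriv (fun w => PowerSeries.coeff n (Φ w)) z -
      ((n : ℂ) + 1) * ((μ : ℂ) + (n : ℂ)) * PowerSeries.coeff (n + 1) (Φ z)


-- ===== auxiliary lemmas =====

open Finset in
private lemma stmt18_factC (m : ℕ) :
    (((m + 1).factorial : ℕ) : ℂ) = ((m : ℂ) + 1) * ((m.factorial : ℕ) : ℂ) := by
  rw [Nat.factorial_succ]; push_cast; ring

private lemma stmt18_lemA (m : ℕ) (K : ℂ) :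
    K * ((-K) ^ m / (m.factorial : ℂ)) =
      -((((m : ℂ)) + 1) * ((-K) ^ (m + 1) / ((m + 1).factorial : ℂ))) := by
  have h1 : ((m.factorial : ℕ) : ℂ) ≠ 0 := Nat.cast_ne_zero.mpr m.factorial_ne_zero
  have h2 : ((m : ℂ) + 1) ≠ 0 := Nat.cast_add_one_ne_zero m
  rw [stmt18_factC, pow_succ]
  field_simp

private lemma stmt18_lemB (m : ℕ) (K : ℂ) :
    (m : ℂ) * (-K) ^ (m - 1) * K ^ 2 / (m.factorial : ℂ) =
      (m : ℂ) * ((m : ℂ) + 1) * ((-K) ^ (m + 1) / ((m + 1).factorial : ℂ)) := by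
  cases m with
  | zero => simp
  | succ p =>
    have h1 : ((p.factorial : ℕ) : ℂ) ≠ 0 := Nat.cast_ne_zero.mpr p.factorial_ne_zero
    have h1' : (((p + 1).factorial : ℕ) : ℂ) ≠ 0 := Nat.cast_ne_zero.mpr (p + 1).factorial_ne_zero
    have h2 : ((p : ℂ) + 1) ≠ 0 := Nat.cast_add_one_ne_zero p
    have h3 : ((p : ℂ) + 1 + 1) ≠ 0 := by
      have := Nat.cast_add_one_ne_zero (R := ℂ) (p + 1); push_cast at this ⊢; exact this
    rw [stmt18_factC (p + 1), stmt18_factC p, show p + 1 - 1 = p from rfl]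
    have hp : (-K) ^ (p + 1 + 1) = (-K) ^ p * K ^ 2 := by ring
    rw [hp]
    push_cast
    field_simp

open Finset in
private lemma stmt18_key (L P u K : ℂ) (A A' : ℕ → ℂ) (n : ℕ) :
    P * u * ∑ j ∈ range (n + 1), (-K) ^ (n - j) / ((n - j).factorial : ℂ) *
        ((A' j - ((j : ℂ) + 1) * (L + (j : ℂ)) * A (j + 1)) * u ^ j) =
      (-L * K * P) * (∑ j ∈ range (n + 1),
          (-K) ^ (n - j) / ((n - j).factorial : ℂ) * (A j * u ^ j))
        + P * (∑ j ∈ range (n + 1),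
            (((n - j : ℕ) : ℂ) * (-K) ^ (n - j - 1) * K ^ 2 / ((n - j).factorial : ℂ) *
                (A j * u ^ j)
              + (-K) ^ (n - j) / ((n - j).factorial : ℂ) *
                ((A' j * u) * u ^ j + A j * ((j : ℂ) * u ^ (j - 1) * (-2 * K * u)))))
        - ((n : ℂ) + 1) * (L + (n : ℂ)) * (P * ∑ j ∈ range (n + 2),
            (-K) ^ (n + 1 - j) / ((n + 1 - j).factorial : ℂ) * (A j * u ^ j)) := by
  set W : ℕ → ℂ := fun j => (-K) ^ (n + 1 - j) / ((n + 1 - j).factorial : ℂ) * (A j * u ^ j)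
    with hW
  have hL : P * u * ∑ j ∈ range (n + 1), (-K) ^ (n - j) / ((n - j).factorial : ℂ) *
        ((A' j - ((j : ℂ) + 1) * (L + (j : ℂ)) * A (j + 1)) * u ^ j) =
      (P * ∑ j ∈ range (n + 1), (-K) ^ (n - j) / ((n - j).factorial : ℂ) * (A' j * u ^ (j + 1)))
        + ∑ j ∈ range (n + 2), (-P * (j : ℂ) * (L + (j : ℂ) - 1)) * W j := by
    rw [Finset.sum_range_succ' (fun j => (-P * (j : ℂ) * (L + (j : ℂ) - 1)) * W j) (n + 1)]
    have h0 : (-P * ((0 : ℕ) : ℂ) * (L + ((0 : ℕ) : ℂ) - 1)) * W 0 = 0 := by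
      simp [hW]
    rw [h0, add_zero, Finset.mul_sum, Finset.mul_sum, ← Finset.sum_add_distrib]
    refine Finset.sum_congr rfl fun j hj => ?_
    have hs : n + 1 - (j + 1) = n - j := by omega
    simp only [hW, hs]
    push_cast
    ring
  have hS1 : (-L * K * P) * (∑ j ∈ range (n + 1),
        (-K) ^ (n - j) / ((n - j).factorial : ℂ) * (A j * u ^ j)) =
      ∑ j ∈ range (n + 2), (L * ((n + 1 - j : ℕ) : ℂ) * P) * W j := by
    rw [Finset.mul_sum,
      Finset.sum_range_succ (fun j => (L * ((n + 1 - j : ℕ) : ℂ) * P) * W j) (n + 1)]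
    have h0 : (L * ((n + 1 - (n + 1) : ℕ) : ℂ) * P) * W (n + 1) = 0 := by simp
    rw [h0, add_zero]
    refine Finset.sum_congr rfl fun j hj => ?_
    have hj' : j ≤ n := by simpa [Nat.lt_succ_iff] using hj
    have hs : n + 1 - j = (n - j) + 1 := by omega
    simp only [hW, hs]
    have h := stmt18_lemA (n - j) K
    push_cast at h ⊢
    linear_combination (-L * P * (A j * u ^ j)) * h
  have hS3 : (∑ j ∈ range (n + 1),
        ((n - j : ℕ) : ℂ) * (-K) ^ (n - j - 1) * K ^ 2 / ((n - j).factorial : ℂ) * (A j * u ^ j)) =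
      ∑ j ∈ range (n + 2), (((n - j : ℕ) : ℂ) * ((n + 1 - j : ℕ) : ℂ)) * W j := by
    rw [Finset.sum_range_succ (fun j => (((n - j : ℕ) : ℂ) * ((n + 1 - j : ℕ) : ℂ)) * W j) (n + 1)]
    have h0 : (((n - (n + 1) : ℕ) : ℂ) * ((n + 1 - (n + 1) : ℕ) : ℂ)) * W (n + 1) = 0 := by simp
    rw [h0, add_zero]
    refine Finset.sum_congr rfl fun j hj => ?_
    have hj' : j ≤ n := by simpa [Nat.lt_succ_iff] using hj
    have hs : n + 1 - j = (n - j) + 1 := by omega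
    simp only [hW, hs]
    have h := stmt18_lemB (n - j) K
    push_cast at h ⊢
    linear_combination (A j * u ^ j) * h
  have hS4 : (∑ j ∈ range (n + 1), (-K) ^ (n - j) / ((n - j).factorial : ℂ) *
        (A j * ((j : ℂ) * u ^ (j - 1) * (-2 * K * u)))) =
      ∑ j ∈ range (n + 2), (2 * (j : ℂ) * ((n + 1 - j : ℕ) : ℂ)) * W j := by
    rw [Finset.sum_range_succ (fun j => (2 * (j : ℂ) * ((n + 1 - j : ℕ) : ℂ)) * W j) (n + 1)]
    have h0 : (2 * ((n + 1 : ℕ) : ℂ) * ((n + 1 - (n + 1) : ℕ) : ℂ)) * W (n + 1) = 0 := by simp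
    rw [h0, add_zero]
    refine Finset.sum_congr rfl fun j hj => ?_
    have hj' : j ≤ n := by simpa [Nat.lt_succ_iff] using hj
    have hs : n + 1 - j = (n - j) + 1 := by omega
    simp only [hW, hs]
    cases j with
    | zero => simp
    | succ p =>
      simp only [show p + 1 - 1 = p from rfl]
      have h := stmt18_lemA (n - (p + 1)) K
      push_cast at h ⊢
      linear_combination (-2 * ((p : ℂ) + 1) * (A (p + 1) * u ^ p * u)) * h
  have hmid : (∑ j ∈ range (n + 1),
        (((n - j : ℕ) : ℂ) * (-K) ^ (n - j - 1) * K ^ 2 / ((n - j).factorial : ℂ) *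
            (A j * u ^ j)
          + (-K) ^ (n - j) / ((n - j).factorial : ℂ) *
            ((A' j * u) * u ^ j + A j * ((j : ℂ) * u ^ (j - 1) * (-2 * K * u))))) =
      (∑ j ∈ range (n + 1),
        ((n - j : ℕ) : ℂ) * (-K) ^ (n - j - 1) * K ^ 2 / ((n - j).factorial : ℂ) * (A j * u ^ j))
      + ((∑ j ∈ range (n + 1), (-K) ^ (n - j) / ((n - j).factorial : ℂ) * (A' j * u ^ (j + 1)))
      + (∑ j ∈ range (n + 1), (-K) ^ (n - j) / ((n - j).factorial : ℂ) *
            (A j * ((j : ℂ) * u ^ (j - 1) * (-2 * K * u))))) := by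
    rw [← Finset.sum_add_distrib, ← Finset.sum_add_distrib]
    refine Finset.sum_congr rfl fun j hj => ?_
    ring
  have hS5 : ((n : ℂ) + 1) * (L + (n : ℂ)) * (P * ∑ j ∈ range (n + 2),
        (-K) ^ (n + 1 - j) / ((n + 1 - j).factorial : ℂ) * (A j * u ^ j)) =
      ∑ j ∈ range (n + 2), (((n : ℂ) + 1) * (L + (n : ℂ)) * P) * W j := by
    rw [Finset.mul_sum, Finset.mul_sum]
    refine Finset.sum_congr rfl fun j hj => ?_
    ring
  have hfinal : ∑ j ∈ range (n + 2), (-P * (j : ℂ) * (L + (j : ℂ) - 1)) * W j =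
      (∑ j ∈ range (n + 2), (L * ((n + 1 - j : ℕ) : ℂ) * P) * W j)
      + P * (∑ j ∈ range (n + 2), (((n - j : ℕ) : ℂ) * ((n + 1 - j : ℕ) : ℂ)) * W j)
      + P * (∑ j ∈ range (n + 2), (2 * (j : ℂ) * ((n + 1 - j : ℕ) : ℂ)) * W j)
      - ∑ j ∈ range (n + 2), (((n : ℂ) + 1) * (L + (n : ℂ)) * P) * W j := by
    rw [Finset.mul_sum, Finset.mul_sum, ← Finset.sum_add_distrib, ← Finset.sum_add_distrib,
      ← Finset.sum_sub_distrib]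
    refine Finset.sum_congr rfl fun j hj => ?_
    have hj' : j ≤ n + 1 := by
      have := Finset.mem_range.mp hj; omega
    rcases Nat.lt_or_ge j (n + 1) with hlt | hge
    · have hj'' : j ≤ n := by omega
      have c1 : ((n + 1 - j : ℕ) : ℂ) = (n : ℂ) + 1 - (j : ℂ) := by
        rw [Nat.cast_sub (by omega)]; push_cast; ring
      have c2 : ((n - j : ℕ) : ℂ) = (n : ℂ) - (j : ℂ) := by
        rw [Nat.cast_sub (by omega)]
      rw [c1, c2]
      ring
    · have hj3 : j = n + 1 := by omega
      subst hj3
      simp only [Nat.sub_self, show n + 1 - (n + 1) = 0 from by omega,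
        show n - (n + 1) = 0 from by omega, Nat.cast_zero]
      push_cast
      ring
  linear_combination hL - hS1 - P * hmid - P * hS3 - P * hS4 + hS5 + hfinal

private lemma stmt18_isOpen_UHP : IsOpen UHP := isOpen_lt continuous_const Complex.continuous_im

private lemma stmt18_det_entries (γ : SL2R) :
    (γ 0 0 : ℝ) * (γ 1 1 : ℝ) - (γ 0 1 : ℝ) * (γ 1 0 : ℝ) = 1 := by
  have h := γ.prop
  rw [Matrix.det_fin_two] at h
  exact h

private lemma stmt18_jJ_ne_zero (γ : SL2R) {z : ℂ} (hz : z ∈ UHP) : jJ γ z ≠ 0 := by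
  intro h
  have h1 : (γ 1 0 : ℝ) * z.im = 0 := by
    have := congrArg Complex.im h
    simpa [jJ, Complex.add_im, Complex.mul_im] using this
  have hz' : z.im ≠ 0 := ne_of_gt hz
  have hc : (γ 1 0 : ℝ) = 0 := by
    rcases mul_eq_zero.mp h1 with h2 | h2
    · exact h2
    · exact absurd h2 hz'
  have h2 : (γ 1 1 : ℝ) = 0 := by
    have := congrArg Complex.re h
    simpa [jJ, hc, Complex.add_re, Complex.mul_re] using this
  have := stmt18_det_entries γ
  rw [hc, h2] at this
  simp at this

private lemma stmt18_mact_mem (γ : SL2R) {z : ℂ} (hz : z ∈ UHP) : mact γ z ∈ UHP := by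
  have hJ : jJ γ z ≠ 0 := stmt18_jJ_ne_zero γ hz
  have hN : 0 < Complex.normSq (jJ γ z) := Complex.normSq_pos.mpr hJ
  have hdet := stmt18_det_entries γ
  show 0 < (mact γ z).im
  rw [mact, Complex.div_im]
  rw [div_sub_div_same]
  apply div_pos
  · simp only [jJ, Complex.add_im, Complex.add_re, Complex.mul_im, Complex.mul_re,
      Complex.ofReal_im, Complex.ofReal_re]
    have hzim : 0 < z.im := hz
    nlinarith [hzim, hdet]
  · exact hN

private lemma stmt18_hasDerivAt_jJ (γ : SL2R) (z : ℂ) :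
    HasDerivAt (jJ γ) ((γ 1 0 : ℝ) : ℂ) z := by
  have h : HasDerivAt (fun w : ℂ => ((γ 1 0 : ℝ) : ℂ) * w + ((γ 1 1 : ℝ) : ℂ))
      ((γ 1 0 : ℝ) : ℂ) z := by
    simpa using (((hasDerivAt_id z).const_mul (((γ 1 0 : ℝ) : ℂ))).add_const (((γ 1 1 : ℝ)) : ℂ))
  exact h

private lemma stmt18_hasDerivAt_mact (γ : SL2R) {z : ℂ} (hz : z ∈ UHP) :
    HasDerivAt (mact γ) (jJ γ z ^ (-2 : ℤ)) z := by
  have hJ : jJ γ z ≠ 0 := stmt18_jJ_ne_zero γ hz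
  have hnum : HasDerivAt (fun w : ℂ => ((γ 0 0 : ℝ) : ℂ) * w + ((γ 0 1 : ℝ) : ℂ))
      ((γ 0 0 : ℝ) : ℂ) z := by
    simpa using (((hasDerivAt_id z).const_mul (((γ 0 0 : ℝ) : ℂ))).add_const (((γ 0 1 : ℝ)) : ℂ))
  have h := hnum.div (stmt18_hasDerivAt_jJ γ z) hJ
  refine h.congr_deriv (Eq.symm ?_)
  have hd : ((γ 0 0 : ℝ) : ℂ) * jJ γ z - (((γ 0 0 : ℝ) : ℂ) * z + ((γ 0 1 : ℝ) : ℂ)) *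
      ((γ 1 0 : ℝ) : ℂ) = 1 := by
    have h0 := stmt18_det_entries γ
    rw [jJ]
    have h1 : (((γ 0 0 : ℝ) * (γ 1 1 : ℝ) - (γ 0 1 : ℝ) * (γ 1 0 : ℝ) : ℝ) : ℂ) = (1 : ℂ) := by
      rw [h0]; norm_num
    push_cast at h1
    linear_combination h1
  rw [hd]
  rw [zpow_neg, zpow_two]
  rw [one_div]
  ring_nf

private lemma stmt18_hasDerivAt_neg_kK (γ : SL2R) {z : ℂ} (hz : z ∈ UHP) :
    HasDerivAt (fun w => -(kK γ w)) ((kK γ z) ^ 2) z := by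
  have hJ : jJ γ z ≠ 0 := stmt18_jJ_ne_zero γ hz
  have h := ((hasDerivAt_const z (((γ 1 0 : ℝ)) : ℂ)).div (stmt18_hasDerivAt_jJ γ z) hJ).neg
  refine h.congr_deriv (Eq.symm ?_)
  rw [kK]
  field_simp
  ring

private lemma stmt18_hasDerivAt_zpow_jJ (γ : SL2R) {z : ℂ} (hz : z ∈ UHP) (m : ℤ) :
    HasDerivAt (fun w => jJ γ w ^ m) ((m : ℂ) * kK γ z * jJ γ z ^ m) z := by
  have hJ : jJ γ z ≠ 0 := stmt18_jJ_ne_zero γ hz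
  have h := (hasDerivAt_zpow m (jJ γ z) (Or.inl hJ)).comp z (stmt18_hasDerivAt_jJ γ z)
  refine h.congr_deriv (Eq.symm ?_)
  rw [kK, zpow_sub_one₀ hJ]
  field_simp

open Finset in
private lemma stmt18_coeff_psAct (l : ℤ) (Φ : ℂ → PowerSeries ℂ) (γ : SL2R) (z : ℂ) (n : ℕ) :
    PowerSeries.coeff n (psAct l Φ γ z) = jJ γ z ^ (-l) *
      ∑ j ∈ Finset.range (n + 1), (-(kK γ z)) ^ (n - j) / ((n - j).factorial : ℂ) *
        (PowerSeries.coeff j (Φ (mact γ z)) * (jJ γ z ^ (-2 : ℤ)) ^ j) := by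
  rw [psAct, mul_assoc, PowerSeries.coeff_C_mul, PowerSeries.coeff_mul]
  congr 1
  rw [Finset.Nat.sum_antidiagonal_eq_sum_range_succ_mk]
  rw [← Finset.sum_range_reflect]
  apply Finset.sum_congr rfl
  intro j hj
  have hj' : j ≤ n := by
    have := Finset.mem_range.mp hj; omega
  have h1 : n + 1 - 1 - j = n - j := by omega
  have h2 : n - (n - j) = j := by omega
  rw [h1]
  simp only [PowerSeries.coeff_mk, PowerSeries.coeff_rescale, h2]
  ring


-- STATEMENT 18
theorem stmt18 (Γ : Subgroup SL2R) (hΓ : DiscreteTopology Γ) (l : ℤ)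
    (Φ : ℂ → PowerSeries ℂ) (hΦ : ∀ k : ℕ, Hol fun z => PowerSeries.coeff k (Φ z))
    (hinv : ∀ γ ∈ Γ, ∀ z ∈ UHP, psAct l Φ γ z = Φ z) :
    (∀ k : ℕ, Hol fun z => PowerSeries.coeff k (heat (l : ℝ) Φ z)) ∧
      ∀ γ ∈ Γ, ∀ z ∈ UHP, psAct (l + 2) (heat (l : ℝ) Φ) γ z = heat (l : ℝ) Φ z := by
  constructor
  · intro n
    simp only [heat, PowerSeries.coeff_mk]
    have h1 : Hol (deriv fun w => PowerSeries.coeff n (Φ w)) :=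
      (((hΦ n).analyticOnNhd stmt18_isOpen_UHP).deriv).differentiableOn
    exact h1.sub ((hΦ (n + 1)).const_mul _)
  · intro γ hγ z hz
    have hJ : jJ γ z ≠ 0 := stmt18_jJ_ne_zero γ hz
    have hw : mact γ z ∈ UHP := stmt18_mact_mem γ hz
    apply PowerSeries.ext
    intro n
    set L : ℂ := (((l : ℝ)) : ℂ) with hL
    set K : ℂ := kK γ z with hK
    set u : ℂ := jJ γ z ^ (-2 : ℤ) with hu
    set P : ℂ := jJ γ z ^ (-l) with hP
    set A : ℕ → ℂ := fun j => PowerSeries.coeff j (Φ (mact γ z)) with hA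
    set A' : ℕ → ℂ := fun j => deriv (fun t => PowerSeries.coeff j (Φ t)) (mact γ z) with hA'
    have hPd : HasDerivAt (fun w => jJ γ w ^ (-l)) (-L * K * P) z := by
      have h := stmt18_hasDerivAt_zpow_jJ γ hz (-l)
      convert h using 1
      rw [hL, hK, hP]
      push_cast
      ring
    have hud : HasDerivAt (fun w => jJ γ w ^ (-2 : ℤ)) (-2 * K * u) z := by
      have h := stmt18_hasDerivAt_zpow_jJ γ hz (-2)
      convert h using 1
      rw [hK, hu]
      push_cast
      ring
    have hKd : HasDerivAt (fun w => -(kK γ w)) (K ^ 2) z := stmt18_hasDerivAt_neg_kK γ hz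
    have hmd : HasDerivAt (mact γ) u z := stmt18_hasDerivAt_mact γ hz
    have hAd : ∀ j : ℕ,
        HasDerivAt (fun w => PowerSeries.coeff j (Φ (mact γ w))) (A' j * u) z := by
      intro j
      have h1 : DifferentiableAt ℂ (fun t => PowerSeries.coeff j (Φ t)) (mact γ z) :=
        (hΦ j).differentiableAt (stmt18_isOpen_UHP.mem_nhds hw)
      exact (h1.hasDerivAt).comp z hmd
    have hterm : ∀ j ∈ Finset.range (n + 1),
        HasDerivAt (fun w => (-(kK γ w)) ^ (n - j) / ((n - j).factorial : ℂ) *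
            (PowerSeries.coeff j (Φ (mact γ w)) * (jJ γ w ^ (-2 : ℤ)) ^ j))
          ((((n - j : ℕ) : ℂ) * (-K) ^ (n - j - 1) * K ^ 2 / ((n - j).factorial : ℂ)) *
              (A j * u ^ j)
            + (-K) ^ (n - j) / ((n - j).factorial : ℂ) *
              ((A' j * u) * u ^ j + A j * ((j : ℂ) * u ^ (j - 1) * (-2 * K * u)))) z := by
      intro j _
      exact ((hKd.pow (n - j)).div_const _).mul ((hAd j).mul (hud.pow j))
    have hD : HasDerivAt (fun w => jJ γ w ^ (-l) *
        ∑ j ∈ Finset.range (n + 1), (-(kK γ w)) ^ (n - j) / ((n - j).factorial : ℂ) *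
          (PowerSeries.coeff j (Φ (mact γ w)) * (jJ γ w ^ (-2 : ℤ)) ^ j))
        ((-L * K * P) * (∑ j ∈ Finset.range (n + 1),
            (-K) ^ (n - j) / ((n - j).factorial : ℂ) * (A j * u ^ j))
          + P * (∑ j ∈ Finset.range (n + 1),
              (((n - j : ℕ) : ℂ) * (-K) ^ (n - j - 1) * K ^ 2 / ((n - j).factorial : ℂ) *
                  (A j * u ^ j)
                + (-K) ^ (n - j) / ((n - j).factorial : ℂ) *
                  ((A' j * u) * u ^ j + A j * ((j : ℂ) * u ^ (j - 1) * (-2 * K * u)))))) z :=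
      hPd.mul (HasDerivAt.fun_sum hterm)
    have hev : (fun w => PowerSeries.coeff n (psAct l Φ γ w)) =ᶠ[nhds z]
        (fun w => PowerSeries.coeff n (Φ w)) := by
      filter_upwards [stmt18_isOpen_UHP.mem_nhds hz] with w hw'
      rw [hinv γ hγ w hw']
    have hfun : (fun w => PowerSeries.coeff n (psAct l Φ γ w)) = (fun w => jJ γ w ^ (-l) *
        ∑ j ∈ Finset.range (n + 1), (-(kK γ w)) ^ (n - j) / ((n - j).factorial : ℂ) *
          (PowerSeries.coeff j (Φ (mact γ w)) * (jJ γ w ^ (-2 : ℤ)) ^ j)) :=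
      funext fun w => stmt18_coeff_psAct l Φ γ w n
    have hderiv : deriv (fun w => PowerSeries.coeff n (Φ w)) z =
        (-L * K * P) * (∑ j ∈ Finset.range (n + 1),
            (-K) ^ (n - j) / ((n - j).factorial : ℂ) * (A j * u ^ j))
          + P * (∑ j ∈ Finset.range (n + 1),
              (((n - j : ℕ) : ℂ) * (-K) ^ (n - j - 1) * K ^ 2 / ((n - j).factorial : ℂ) *
                  (A j * u ^ j)
                + (-K) ^ (n - j) / ((n - j).factorial : ℂ) *
                  ((A' j * u) * u ^ j + A j * ((j : ℂ) * u ^ (j - 1) * (-2 * K * u))))) := by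
      rw [← hev.deriv_eq, hfun]
      exact hD.deriv
    have hcoeff1 : PowerSeries.coeff (n + 1) (Φ z) = P * ∑ j ∈ Finset.range (n + 2),
        (-K) ^ (n + 1 - j) / ((n + 1 - j).factorial : ℂ) * (A j * u ^ j) := by
      rw [← hinv γ hγ z hz, stmt18_coeff_psAct]
    have hzpow : jJ γ z ^ (-(l + 2)) = P * u := by
      rw [hP, hu, ← zpow_add₀ hJ]
      congr 1
      ring
    rw [stmt18_coeff_psAct (l + 2) _ γ z n, hzpow]
    have hheatw : ∀ j : ℕ, PowerSeries.coeff j (heat (l : ℝ) Φ (mact γ z)) =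
        A' j - ((j : ℂ) + 1) * (L + (j : ℂ)) * A (j + 1) := by
      intro j
      simp only [heat, PowerSeries.coeff_mk, hA, hA', hL]
    simp only [hheatw]
    rw [show (heat (l : ℝ) Φ z) = PowerSeries.mk fun m =>
        deriv (fun w => PowerSeries.coeff m (Φ w)) z -
          ((m : ℂ) + 1) * ((((l : ℝ)) : ℂ) + (m : ℂ)) * PowerSeries.coeff (m + 1) (Φ z) from rfl]
    rw [PowerSeries.coeff_mk, hderiv, hcoeff1]
    exact stmt18_key L P u K A A' n
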